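/- Consider the value iteration sequence for a fixed (rewarded) Markov chain: $V_0 \equiv 0$ and $V_{i+1}(s) = r(s) + \int_{\mathcal{S}} V_i(s')\,p(s,ds')$, where $r: \mathcal{S} \to [0,1]$ is bounded measurable and $p$ is a transition kernel on $\mathcal{S}$ satisfying: the $m^\star$-step kernel satisfies $\|p^{(m^\star)}(s,\cdot) - p^{(m^\star)}(s',\cdot)\|_{TV} \leq 2\alpha$ for all $s,s'$ and some $\alpha \in (0,1)$. Then for all $i \in \mathbb{N}$, $\mathrm{span}(V_i) \leq \mathrm{span}(r)\,(m^\star + 1)\,\frac{2-\alpha}{1-\alpha}$. -/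

import Mathlib

open MeasureTheory

/-- Total variation norm of the difference of two measures. -/
noncomputable def tvDist {S : Type*} [MeasurableSpace S] (μ ν : Measure S) : ℝ :=
  sSup {x : ℝ | ∃ (n : ℕ) (B : Fin n → Set S), (∀ i, MeasurableSet (B i)) ∧
    (Pairwise fun i j => Disjoint (B i) (B j)) ∧ (⋃ i, B i) = Set.univ ∧
    x = ∑ i, |(μ (B i)).toReal - (ν (B i)).toReal|}

/-- The `m`-step transition law of the Markov chain with one-step kernel `p`, started at `s`. -/
noncomputable def stepDist {S : Type*} [MeasurableSpace S] (p : S → Measure S) :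
    ℕ → S → Measure S
  | 0, s => Measure.dirac s
  | n + 1, s => (stepDist p n s).bind p

/-- The span of a real-valued function: `sup v - inf v`. -/
noncomputable def spanF {Z : Type*} (v : Z → ℝ) : ℝ :=
  sSup (Set.range v) - sInf (Set.range v)

section Aux

variable {S : Type*} [MeasurableSpace S]

lemma aux_integrable_of_abs_le (ν : Measure S) [IsFiniteMeasure ν] {f : S → ℝ}
    (hf : Measurable f) {C : ℝ} (hC : ∀ s, |f s| ≤ C) : Integrable f ν :=
  Integrable.mono' (integrable_const C) hf.aestronglyMeasurable (Filter.Eventually.of_forall hC)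

lemma aux_part_sum (μ : Measure S) [IsProbabilityMeasure μ] {n : ℕ} {B : Fin n → Set S}
    (hm : ∀ i, MeasurableSet (B i)) (hd : Pairwise fun i j => Disjoint (B i) (B j))
    (hu : (⋃ i, B i) = Set.univ) : ∑ i, (μ (B i)).toReal = 1 := by
  have h1 : μ (⋃ i, B i) = ∑' i, μ (B i) := measure_iUnion hd hm
  rw [hu, measure_univ, tsum_fintype] at h1
  have h2 : ((∑ i, μ (B i)).toReal) = ∑ i, (μ (B i)).toReal :=
    ENNReal.toReal_sum (fun i _ => measure_ne_top μ _)
  rw [← h2, ← h1]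
  simp

lemma tvDist_set_bound {μ ν : Measure S} [IsProbabilityMeasure μ] [IsProbabilityMeasure ν]
    {β : ℝ} (htv : tvDist μ ν ≤ 2 * β) {B : Set S} (hB : MeasurableSet B) :
    (μ B).toReal - (ν B).toReal ≤ β := by
  set x : ℝ := |(μ B).toReal - (ν B).toReal| + |(μ Bᶜ).toReal - (ν Bᶜ).toReal| with hx
  have hmem : x ∈ {x : ℝ | ∃ (n : ℕ) (B : Fin n → Set S), (∀ i, MeasurableSet (B i)) ∧
      (Pairwise fun i j => Disjoint (B i) (B j)) ∧ (⋃ i, B i) = Set.univ ∧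
      x = ∑ i, |(μ (B i)).toReal - (ν (B i)).toReal|} := by
    refine ⟨2, ![B, Bᶜ], ?_, ?_, ?_, ?_⟩
    · intro i; fin_cases i <;> simpa using hB.compl
    · intro i j hij
      fin_cases i <;> fin_cases j <;>
        simp_all [disjoint_compl_right, disjoint_compl_left]
    · rw [← Set.union_compl_self B]
      ext y; simp [Fin.exists_fin_two]; tauto
    · simp [Fin.sum_univ_two, hx]
  have hbdd : BddAbove {x : ℝ | ∃ (n : ℕ) (B : Fin n → Set S), (∀ i, MeasurableSet (B i)) ∧
      (Pairwise fun i j => Disjoint (B i) (B j)) ∧ (⋃ i, B i) = Set.univ ∧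
      x = ∑ i, |(μ (B i)).toReal - (ν (B i)).toReal|} := by
    refine ⟨2, ?_⟩
    rintro y ⟨n, B', hm, hd, hu, rfl⟩
    have h1 : ∑ i, |(μ (B' i)).toReal - (ν (B' i)).toReal|
        ≤ ∑ i, ((μ (B' i)).toReal + (ν (B' i)).toReal) := by
      refine Finset.sum_le_sum fun i _ => ?_
      calc |(μ (B' i)).toReal - (ν (B' i)).toReal|
          ≤ |(μ (B' i)).toReal| + |(ν (B' i)).toReal| := abs_sub _ _
        _ = (μ (B' i)).toReal + (ν (B' i)).toReal := by
            rw [abs_of_nonneg ENNReal.toReal_nonneg, abs_of_nonneg ENNReal.toReal_nonneg]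
    rw [Finset.sum_add_distrib, aux_part_sum μ hm hd hu, aux_part_sum ν hm hd hu] at h1
    linarith
  have hle : x ≤ tvDist μ ν := le_csSup hbdd hmem
  have hcμ : (μ Bᶜ).toReal = 1 - (μ B).toReal := by
    rw [prob_compl_eq_one_sub hB, ENNReal.toReal_sub_of_le prob_le_one ENNReal.one_ne_top,
      ENNReal.toReal_one]
  have hcν : (ν Bᶜ).toReal = 1 - (ν B).toReal := by
    rw [prob_compl_eq_one_sub hB, ENNReal.toReal_sub_of_le prob_le_one ENNReal.one_ne_top,
      ENNReal.toReal_one]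
  have h2 : x = 2 * |(μ B).toReal - (ν B).toReal| := by
    rw [hx, hcμ, hcν]
    rw [show (1 - (μ B).toReal) - (1 - (ν B).toReal) = -((μ B).toReal - (ν B).toReal) by ring,
      abs_neg]
    ring
  have habs : (μ B).toReal - (ν B).toReal ≤ |(μ B).toReal - (ν B).toReal| := le_abs_self _
  linarith

variable (p : S → Measure S)

lemma stepDist_measurable (hmp : Measurable p) : ∀ n, Measurable (stepDist p n)
  | 0 => by simpa [stepDist] using Measure.measurable_dirac
  | n + 1 => by
      have := stepDist_measurable hmp n
      simpa [stepDist, Function.comp_def] using (Measure.measurable_bind' hmp).comp this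

lemma stepDist_prob (hp : ∀ s, IsProbabilityMeasure (p s)) (hmp : Measurable p) :
    ∀ n s, IsProbabilityMeasure (stepDist p n s)
  | 0, s => by simpa [stepDist] using Measure.dirac.isProbabilityMeasure
  | n + 1, s => by
      haveI := stepDist_prob hp hmp n s
      constructor
      rw [show stepDist p (n + 1) s = (stepDist p n s).bind p from rfl,
        Measure.bind_apply MeasurableSet.univ hmp.aemeasurable]
      have : ∀ a, p a Set.univ = 1 := fun a => (hp a).measure_univ
      simp [this]

lemma stepDist_add (hmp : Measurable p) (m : ℕ) :
    ∀ (n : ℕ) (s : S), stepDist p (m + n) s = (stepDist p m s).bind (stepDist p n)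
  | 0, s => by
      have : stepDist p 0 = Measure.dirac := rfl
      rw [this, Measure.bind_dirac, Nat.add_zero]
  | n + 1, s => by
      have h1 : stepDist p (m + (n + 1)) s = (stepDist p (m + n) s).bind p := rfl
      rw [h1, stepDist_add hmp m n s,
        Measure.bind_bind (stepDist_measurable p hmp n).aemeasurable hmp.aemeasurable]
      rfl

lemma stepDist_succ' (hmp : Measurable p) (n : ℕ) (s : S) :
    stepDist p (n + 1) s = (p s).bind (stepDist p n) := by
  have h0 : stepDist p (0 + (n + 1)) s = stepDist p (n + 1) s := by norm_num
  rw [← h0, show (0 : ℕ) + (n + 1) = (0 + 1) + n by omega, stepDist_add p hmp (0 + 1) n s]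
  congr 1
  show stepDist p 1 s = p s
  show (stepDist p 0 s).bind p = p s
  show (Measure.dirac s).bind p = p s
  exact Measure.dirac_bind hmp s

lemma aux_measurable_integral (q : S → Measure S) (hq : Measurable q) {f : S → ℝ}
    (hf : Measurable f) (h0 : ∀ s, 0 ≤ f s) : Measurable fun x => ∫ y, f y ∂q x := by
  have hl : Measurable fun x => ∫⁻ y, ENNReal.ofReal (f y) ∂q x :=
    (Measure.measurable_lintegral hf.ennreal_ofReal).comp hq
  have heq : ∀ x, ∫ y, f y ∂q x = (∫⁻ y, ENNReal.ofReal (f y) ∂q x).toReal := fun x =>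
    integral_eq_lintegral_of_nonneg_ae (Filter.Eventually.of_forall h0)
      hf.aestronglyMeasurable
  simp only [heq]
  exact hl.ennreal_toReal

lemma aux_integral_bind (μ : Measure S) [IsProbabilityMeasure μ] (q : S → Measure S)
    (hq : Measurable q) (hqp : ∀ s, IsProbabilityMeasure (q s)) {f : S → ℝ}
    (hf : Measurable f) (h0 : ∀ s, 0 ≤ f s) {C : ℝ} (hC : ∀ s, f s ≤ C) :
    ∫ x, f x ∂(μ.bind q) = ∫ x, ∫ y, f y ∂q x ∂μ := by
  have hfi : ∀ (ν : Measure S) [IsProbabilityMeasure ν], Integrable f ν := by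
    intro ν _
    exact aux_integrable_of_abs_le ν hf fun s => abs_le.2 ⟨by linarith [h0 s, hC s], hC s⟩
  have hinner : ∀ x, ∫⁻ y, ENNReal.ofReal (f y) ∂q x = ENNReal.ofReal (∫ y, f y ∂q x) := by
    intro x
    haveI := hqp x
    exact (ofReal_integral_eq_lintegral_ofReal (hfi (q x)) (Filter.Eventually.of_forall h0)).symm
  have hg0 : ∀ x, 0 ≤ ∫ y, f y ∂q x := by
    intro x; exact integral_nonneg h0
  rw [integral_eq_lintegral_of_nonneg_ae (Filter.Eventually.of_forall h0)
    hf.aestronglyMeasurable,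
    integral_eq_lintegral_of_nonneg_ae (Filter.Eventually.of_forall hg0)
      (aux_measurable_integral q hq hf h0).aestronglyMeasurable,
    Measure.lintegral_bind hq.aemeasurable hf.ennreal_ofReal.aemeasurable]
  congr 1
  exact lintegral_congr hinner

lemma aux_integral_diff_le [Nonempty S] (μ ν : Measure S) [IsProbabilityMeasure μ]
    [IsProbabilityMeasure ν] {g : S → ℝ} (hg : Measurable g) {c C β : ℝ}
    (hc : ∀ s, c ≤ g s) (hC : ∀ s, g s ≤ C) (hβ : 0 ≤ β) (htv : tvDist μ ν ≤ 2 * β) :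
    ∫ s, g s ∂μ - ∫ s, g s ∂ν ≤ (C - c) * β := by
  obtain ⟨s0⟩ := ‹Nonempty S›
  set M : ℝ := C - c with hM
  have hM0 : 0 ≤ M := by have := hc s0; have := hC s0; simp only [hM]; linarith
  set g' : S → ℝ := fun s => g s - c with hg'
  have hg'meas : Measurable g' := hg.sub measurable_const
  have hg'0 : ∀ s, 0 ≤ g' s := fun s => by simp only [hg']; linarith [hc s]
  have hg'M : ∀ s, g' s ≤ M := fun s => by simp only [hg', hM]; linarith [hC s]
  have hg'abs : ∀ s, |g' s| ≤ M := fun s => abs_le.2 ⟨by linarith [hg'0 s], hg'M s⟩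
  have hint : ∀ (ρ : Measure S) [IsProbabilityMeasure ρ], Integrable g' ρ := by
    intro ρ _; exact aux_integrable_of_abs_le ρ hg'meas hg'abs
  have hsplit : ∀ (ρ : Measure S) [IsProbabilityMeasure ρ],
      ∫ s, g' s ∂ρ = ∫ s, g s ∂ρ - c := by
    intro ρ _
    have hgint : Integrable g ρ := by
      have h := (hint ρ).add (integrable_const c)
      have heq : (g' + fun _ => c) = g := by funext s; simp [hg']
      rwa [heq] at h
    rw [show g' = fun s => g s - c from rfl, integral_sub hgint (integrable_const c)]
    simp [measure_univ]
  -- layer cake representation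
  have hrep : ∀ (ρ : Measure S) [IsProbabilityMeasure ρ],
      ∫ s, g' s ∂ρ = ∫ t in Set.Ioc 0 M, (ρ {a : S | t ≤ g' a}).toReal := by
    intro ρ _
    exact (hint ρ).integral_eq_integral_Ioc_meas_le (Filter.Eventually.of_forall hg'0)
      (Filter.Eventually.of_forall hg'M)
  set F : ℝ → ℝ := fun t => (μ {a : S | t ≤ g' a}).toReal with hF
  set G : ℝ → ℝ := fun t => (ν {a : S | t ≤ g' a}).toReal with hG
  have hmono : ∀ (ρ : Measure S) [IsFiniteMeasure ρ],
      Antitone fun t => (ρ {a : S | t ≤ g' a}).toReal := by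
    intro ρ _ t₁ t₂ h12
    exact ENNReal.toReal_mono (measure_ne_top _ _)
      (measure_mono fun a ha => le_trans h12 ha)
  have hIoc : volume (Set.Ioc (0:ℝ) M) < ⊤ := by
    rw [Real.volume_Ioc]; exact ENNReal.ofReal_lt_top
  have hconst : IntegrableOn (fun _ : ℝ => (1:ℝ)) (Set.Ioc 0 M) :=
    integrableOn_const hIoc.ne
  have hFint : IntegrableOn F (Set.Ioc 0 M) := by
    refine Integrable.mono' hconst
      ((hmono μ).measurable.aestronglyMeasurable) (Filter.Eventually.of_forall fun t => ?_)
    rw [Real.norm_eq_abs, abs_of_nonneg ENNReal.toReal_nonneg]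
    exact ENNReal.toReal_le_of_le_ofReal zero_le_one (by simpa using prob_le_one)
  have hGint : IntegrableOn G (Set.Ioc 0 M) := by
    refine Integrable.mono' hconst
      ((hmono ν).measurable.aestronglyMeasurable) (Filter.Eventually.of_forall fun t => ?_)
    rw [Real.norm_eq_abs, abs_of_nonneg ENNReal.toReal_nonneg]
    exact ENNReal.toReal_le_of_le_ofReal zero_le_one (by simpa using prob_le_one)
  have key : ∫ s, g' s ∂μ - ∫ s, g' s ∂ν ≤ M * β := by
    rw [hrep μ, hrep ν, ← integral_sub hFint hGint]
    have hbound : ∀ t ∈ Set.Ioc 0 M, F t - G t ≤ β := by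
      intro t _
      exact tvDist_set_bound htv (measurableSet_le measurable_const hg'meas)
    calc ∫ t in Set.Ioc 0 M, (F t - G t)
        ≤ ∫ _t in Set.Ioc 0 M, β := by
          refine setIntegral_mono_on (hFint.sub hGint)
            (integrableOn_const (ne_of_lt (by rw [Real.volume_Ioc]; exact ENNReal.ofReal_lt_top)))
            measurableSet_Ioc hbound
      _ = M * β := by
          rw [setIntegral_const, measureReal_def, Real.volume_Ioc, smul_eq_mul, sub_zero,
            ENNReal.toReal_ofReal hM0]
  have := hsplit μ
  have := hsplit ν
  linarith [key]

end Aux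

theorem stmt8 {S : Type*} [MeasurableSpace S] [Nonempty S] (p : S → Measure S)
    (hp : ∀ s, IsProbabilityMeasure (p s)) (hmp : Measurable p)
    (r : S → ℝ) (hr : Measurable r) (hr01 : ∀ s, r s ∈ Set.Icc (0 : ℝ) 1)
    (mstar : ℕ) (hms : 0 < mstar) (α : ℝ) (hα : α ∈ Set.Ioo (0 : ℝ) 1)
    (hcontra : ∀ s s', tvDist (stepDist p mstar s) (stepDist p mstar s') ≤ 2 * α)
    (V : ℕ → S → ℝ) (hV0 : ∀ s, V 0 s = 0)
    (hVrec : ∀ i s, V (i + 1) s = r s + ∫ s', V i s' ∂(p s)) :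
    ∀ i : ℕ, spanF (V i) ≤ spanF r * (mstar + 1) * (2 - α) / (1 - α) := by
  obtain ⟨s0⟩ := ‹Nonempty S›
  have hα0 : 0 < α := hα.1
  have hα1 : α < 1 := hα.2
  have hprob : ∀ n s, IsProbabilityMeasure (stepDist p n s) := stepDist_prob p hp hmp
  have hmeas : ∀ n, Measurable (stepDist p n) := stepDist_measurable p hmp
  set Rs : ℝ := sSup (Set.range r) with hRs
  set Ri : ℝ := sInf (Set.range r) with hRi
  have hbddA : BddAbove (Set.range r) := ⟨1, by rintro y ⟨s, rfl⟩; exact (hr01 s).2⟩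
  have hbddB : BddBelow (Set.range r) := ⟨0, by rintro y ⟨s, rfl⟩; exact (hr01 s).1⟩
  have hrle : ∀ s, r s ≤ Rs := fun s => le_csSup hbddA ⟨s, rfl⟩
  have hrge : ∀ s, Ri ≤ r s := fun s => csInf_le hbddB ⟨s, rfl⟩
  have hRs1 : Rs ≤ 1 := csSup_le ⟨r s0, ⟨s0, rfl⟩⟩ (by rintro y ⟨s, rfl⟩; exact (hr01 s).2)
  have hRi0 : 0 ≤ Ri := le_csInf ⟨r s0, ⟨s0, rfl⟩⟩ (by rintro y ⟨s, rfl⟩; exact (hr01 s).1)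
  have hsr0 : 0 ≤ Rs - Ri := by linarith [hrle s0, hrge s0]
  set W : ℕ → S → ℝ := fun k s => ∫ y, r y ∂stepDist p k s with hW
  have hWmeas : ∀ k, Measurable (W k) := fun k =>
    aux_measurable_integral _ (hmeas k) hr fun s => (hr01 s).1
  have hrint : ∀ (ρ : Measure S) [IsProbabilityMeasure ρ], Integrable r ρ := by
    intro ρ _
    exact aux_integrable_of_abs_le ρ hr fun s => abs_le.2 ⟨by linarith [(hr01 s).1], (hr01 s).2⟩
  have hWlb : ∀ k s, Ri ≤ W k s := by
    intro k s
    haveI := hprob k s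
    calc Ri = ∫ _y, Ri ∂stepDist p k s := by simp [measure_univ]
      _ ≤ ∫ y, r y ∂stepDist p k s :=
        integral_mono (integrable_const Ri) (hrint _) fun y => hrge y
  have hWub : ∀ k s, W k s ≤ Rs := by
    intro k s
    haveI := hprob k s
    calc ∫ y, r y ∂stepDist p k s ≤ ∫ _y, Rs ∂stepDist p k s :=
        integral_mono (hrint _) (integrable_const Rs) fun y => hrle y
      _ = Rs := by simp [measure_univ]
  have hW01 : ∀ k s, 0 ≤ W k s ∧ W k s ≤ 1 := fun k s =>
    ⟨le_trans hRi0 (hWlb k s), le_trans (hWub k s) hRs1⟩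
  have hWsucc : ∀ k s, W (k + 1) s = ∫ x, W k x ∂p s := by
    intro k s
    haveI := hp s
    show (∫ y, r y ∂stepDist p (k + 1) s) = _
    rw [stepDist_succ' p hmp k s,
      aux_integral_bind (p s) (stepDist p k) (hmeas k) (hprob k) hr
        (fun s => (hr01 s).1) (fun s => (hr01 s).2)]
  have hVW : ∀ i s, V i s = ∑ k ∈ Finset.range i, W k s := by
    intro i
    induction i with
    | zero => intro s; simp [hV0]
    | succ n ih =>
      intro s
      haveI := hp s
      have hWint : ∀ k, Integrable (W k) (p s) := fun k =>
        aux_integrable_of_abs_le _ (hWmeas k) fun t =>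
          abs_le.2 ⟨by linarith [(hW01 k t).1], (hW01 k t).2⟩
      have h1 : ∫ s', V n s' ∂p s = ∑ k ∈ Finset.range n, W (k + 1) s := by
        rw [integral_congr_ae (Filter.Eventually.of_forall ih),
          integral_finset_sum _ fun k _ => hWint k]
        exact Finset.sum_congr rfl fun k _ => (hWsucc k s).symm
      have hW0eq : W 0 s = r s := by
        show (∫ y, r y ∂stepDist p 0 s) = r s
        show (∫ y, r y ∂Measure.dirac s) = r s
        exact integral_dirac' r s hr.stronglyMeasurable
      rw [hVrec, h1, Finset.sum_range_succ' (fun k => W k s) n, hW0eq]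
      ring
  have key : ∀ k, ∀ s s', W k s - W k s' ≤ α ^ (k / mstar) * (Rs - Ri) := by
    intro k
    induction k using Nat.strong_induction_on with
    | _ k ih =>
      intro s s'
      by_cases hk : k < mstar
      · rw [Nat.div_eq_of_lt hk, pow_zero, one_mul]
        linarith [hWub k s, hWlb k s']
      · push_neg at hk
        set j : ℕ := k - mstar with hj
        have hjk : j < k := Nat.sub_lt (lt_of_lt_of_le hms hk) hms
        have hdecomp : ∀ t, W k t = ∫ x, W j x ∂stepDist p mstar t := by
          intro t
          haveI := hprob mstar t
          show (∫ y, r y ∂stepDist p k t) = _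
          rw [show k = mstar + j by omega, stepDist_add p hmp mstar j t,
            aux_integral_bind (stepDist p mstar t) (stepDist p j) (hmeas j) (hprob j) hr
              (fun s => (hr01 s).1) (fun s => (hr01 s).2)]
        have hbA : BddAbove (Set.range (W j)) := ⟨1, by rintro y ⟨t, rfl⟩; exact (hW01 j t).2⟩
        have hbB : BddBelow (Set.range (W j)) := ⟨0, by rintro y ⟨t, rfl⟩; exact (hW01 j t).1⟩
        have hcle : ∀ t, sInf (Set.range (W j)) ≤ W j t := fun t => csInf_le hbB ⟨t, rfl⟩
        have hCge : ∀ t, W j t ≤ sSup (Set.range (W j)) := fun t => le_csSup hbA ⟨t, rfl⟩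
        have hCc : sSup (Set.range (W j)) - sInf (Set.range (W j))
            ≤ α ^ (j / mstar) * (Rs - Ri) := by
          rw [sub_le_iff_le_add]
          refine csSup_le (Set.range_nonempty (W j)) ?_
          rintro y ⟨t, rfl⟩
          rw [← sub_le_iff_le_add']
          refine le_csInf (Set.range_nonempty (W j)) ?_
          rintro y ⟨t', rfl⟩
          linarith [ih j hjk t t']
        haveI := hprob mstar s
        haveI := hprob mstar s'
        have hd := aux_integral_diff_le (stepDist p mstar s) (stepDist p mstar s')
          (hWmeas j) hcle hCge hα0.le (hcontra s s')
        rw [hdecomp s, hdecomp s']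
        have hkm : k / mstar = j / mstar + 1 := by
          rw [Nat.div_eq_sub_div hms hk]
        calc ∫ x, W j x ∂stepDist p mstar s - ∫ x, W j x ∂stepDist p mstar s'
            ≤ (sSup (Set.range (W j)) - sInf (Set.range (W j))) * α := hd
          _ ≤ (α ^ (j / mstar) * (Rs - Ri)) * α := mul_le_mul_of_nonneg_right hCc hα0.le
          _ = α ^ (k / mstar) * (Rs - Ri) := by rw [hkm, pow_succ]; ring
  -- geometric sum bound
  have hgeom : ∀ J : ℕ, ∑ j ∈ Finset.range J, α ^ j ≤ 1 / (1 - α) := by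
    intro J
    have h1 := geom_sum_mul α J
    have h2 : 0 ≤ α ^ J := pow_nonneg hα0.le J
    rw [le_div_iff₀ (by linarith : (0 : ℝ) < 1 - α)]
    nlinarith
  have hsum : ∀ i : ℕ, ∑ k ∈ Finset.range i, α ^ (k / mstar) ≤ mstar / (1 - α) := by
    intro i
    have hblock : ∀ J : ℕ, ∑ k ∈ Finset.range (mstar * J), α ^ (k / mstar)
        = (mstar : ℝ) * ∑ j ∈ Finset.range J, α ^ j := by
      intro J
      induction J with
      | zero => simp
      | succ n ihn =>
        rw [Nat.mul_succ, Finset.sum_range_add, ihn]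
        have : ∀ t ∈ Finset.range mstar, α ^ ((mstar * n + t) / mstar) = α ^ n := by
          intro t ht
          rw [Nat.mul_add_div hms, Nat.div_eq_of_lt (Finset.mem_range.1 ht), Nat.add_zero]
        rw [Finset.sum_congr rfl this, Finset.sum_const, Finset.card_range,
          Finset.sum_range_succ]
        ring
    have hsub : ∑ k ∈ Finset.range i, α ^ (k / mstar)
        ≤ ∑ k ∈ Finset.range (mstar * i), α ^ (k / mstar) := by
      refine Finset.sum_le_sum_of_subset_of_nonneg ?_ fun k _ _ => pow_nonneg hα0.le _
      exact Finset.range_subset_range.2 (Nat.le_mul_of_pos_left i hms)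
    calc ∑ k ∈ Finset.range i, α ^ (k / mstar)
        ≤ ∑ k ∈ Finset.range (mstar * i), α ^ (k / mstar) := hsub
      _ = (mstar : ℝ) * ∑ j ∈ Finset.range i, α ^ j := hblock i
      _ ≤ (mstar : ℝ) * (1 / (1 - α)) :=
          mul_le_mul_of_nonneg_left (hgeom i) (Nat.cast_nonneg mstar)
      _ = mstar / (1 - α) := by ring
  intro i
  set D : ℝ := (∑ k ∈ Finset.range i, α ^ (k / mstar)) * (Rs - Ri) with hD
  have hpair : ∀ s s', V i s - V i s' ≤ D := by
    intro s s'
    rw [hVW i s, hVW i s', ← Finset.sum_sub_distrib]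
    have h := Finset.sum_le_sum (f := fun k => W k s - W k s')
      (g := fun k => α ^ (k / mstar) * (Rs - Ri)) (s := Finset.range i)
      fun k _ => key k s s'
    rw [← Finset.sum_mul] at h
    exact h
  have hspan : spanF (V i) ≤ D := by
    rw [spanF, sub_le_iff_le_add]
    refine csSup_le (Set.range_nonempty (V i)) ?_
    rintro y ⟨s, rfl⟩
    rw [← sub_le_iff_le_add']
    refine le_csInf (Set.range_nonempty (V i)) ?_
    rintro y ⟨s', rfl⟩
    linarith [hpair s s']
  have hDle : D ≤ (mstar / (1 - α)) * (Rs - Ri) :=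
    mul_le_mul_of_nonneg_right (hsum i) hsr0
  have hfinal : (mstar / (1 - α)) * (Rs - Ri) ≤ (Rs - Ri) * (mstar + 1) * (2 - α) / (1 - α) := by
    rw [div_mul_eq_mul_div, div_le_div_iff₀ (by linarith) (by linarith)]
    have hm0 : (0 : ℝ) ≤ mstar := Nat.cast_nonneg mstar
    nlinarith [mul_nonneg hsr0 hm0, mul_nonneg (mul_nonneg hsr0 hm0) (by linarith : (0:ℝ) ≤ 1 - α),
      mul_nonneg hsr0 (by linarith : (0:ℝ) ≤ 1 - α)]
  have hspanr : spanF r = Rs - Ri := rfl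
  rw [hspanr]
  linarith
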